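/- Let A and B be independent families of N × N random matrices indexed by the same set J, with all entries having moments of all orders, and assume at least one family is permutation invariant in law. Then for any finite connected directed edge-labelled multigraph T with vertex set V (|V| ≤ N), the injective density of the Hadamard products factorizes: δ⁰_N[T(A∘B)] = δ⁰_N[T(A)] · δ⁰_N[T(B)], where A∘B = (A_j ∘ B_j)_{j∈J} is the family of entry-wise products. -/

import Mathlib

open scoped Classical
open MeasureTheory Filter
open scoped Matrix

/-- A (directed) multigraph on vertex type `V` with edge-index type `E`:
each edge `e` goes from `src e` to `tgt e`. -/
structure Multigraph (V : Type*) (E : Type*) where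
  src : E → V
  tgt : E → V

namespace Multigraph

variable {V E : Type*}

/-- The underlying simple graph (forgetting orientation, multiplicity and loops). -/
def toSimple (G : Multigraph V E) : SimpleGraph V :=
  SimpleGraph.fromRel fun v w => ∃ e, G.src e = v ∧ G.tgt e = w

/-- A multigraph is connected when its underlying simple graph is. -/
def Connected (G : Multigraph V E) : Prop := G.toSimple.Connected

/-- The unordered pair of endpoints of an edge. -/
def ends (G : Multigraph V E) (e : E) : Sym2 V := s(G.src e, G.tgt e)

/-- A multigraph is a tree when it has no loops, no multiple edges, and its
underlying simple graph is a tree (connected and acyclic). -/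
def IsTree (G : Multigraph V E) : Prop :=
  G.toSimple.IsTree ∧ (∀ e, G.src e ≠ G.tgt e) ∧ Function.Injective G.ends

/-- The number of edges having the same (unordered) endpoints as `e`. -/
noncomputable def multiplicity [Fintype E] (G : Multigraph V E) (e : E) : ℕ :=
  (Finset.univ.filter fun e' => G.ends e' = G.ends e).card

/-- A double tree: no loops, the underlying simple graph is a tree, and there are
exactly two edges between each pair of adjacent vertices. -/
def IsDoubleTree [Fintype E] (G : Multigraph V E) : Prop :=
  G.toSimple.IsTree ∧ (∀ e, G.src e ≠ G.tgt e) ∧ ∀ e, G.multiplicity e = 2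

/-- The quotient multigraph obtained by identifying the vertices within each
block of the partition (setoid) `π`, keeping every edge. -/
def quot (G : Multigraph V E) (π : Setoid V) : Multigraph (Quotient π) E where
  src e := Quotient.mk π (G.src e)
  tgt e := Quotient.mk π (G.tgt e)

end Multigraph
open ProbabilityTheory

instance matrixMeasurableSpace {m n α : Type*} [MeasurableSpace α] :
    MeasurableSpace (Matrix m n α) :=
  inferInstanceAs (MeasurableSpace (m → n → α))

/-- The permutation matrix of `σ`: entry `(i,j)` is `1` iff `σ i = j`. -/
def permMat (N : ℕ) (σ : Equiv.Perm (Fin N)) : Matrix (Fin N) (Fin N) ℂ :=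
  Matrix.of fun i j => if σ i = j then 1 else 0

/-- The injective density `δ⁰_N[T(A)]` of a random family `A` of `N × N` matrices on a
finite directed edge-labelled multigraph `T` (edges carry a label `γ e` and an adjoint
marker `ε e`): the expectation of the edge product evaluated at a uniformly random
injection `Φ : V ↪ [N]` chosen independently of `A`. -/
noncomputable def injDensity {V E J Ω : Type*} [Fintype V] [Fintype E]
    [MeasurableSpace Ω] (μ : Measure Ω) (N : ℕ)
    (G : Multigraph V E) (γ : E → J) (ε : E → Bool)
    (A : Ω → J → Matrix (Fin N) (Fin N) ℂ) : ℂ :=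
  (Nat.card (V ↪ Fin N) : ℂ)⁻¹ *
    ∑ φ : V ↪ Fin N, ∫ ω, ∏ e : E,
      (if ε e then (A ω (γ e))ᴴ else A ω (γ e)) (φ (G.src e)) (φ (G.tgt e)) ∂μ

lemma permMat_conj_apply {N : ℕ} (σ : Equiv.Perm (Fin N)) (M : Matrix (Fin N) (Fin N) ℂ)
    (i j : Fin N) : (permMat N σ * M * (permMat N σ)ᴴ) i j = M (σ i) (σ j) := by
  simp [Matrix.mul_apply, permMat, Matrix.conjTranspose_apply, Finset.sum_ite_eq,
    apply_ite, Finset.mul_sum]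

lemma exists_perm_comp {V : Type*} [Fintype V] {N : ℕ} (φ ψ : V ↪ Fin N) :
    ∃ σ : Equiv.Perm (Fin N), ∀ v, σ (ψ v) = φ v := by
  have hc : Fintype.card ((Set.range ψ)ᶜ : Set (Fin N))
      = Fintype.card ((Set.range φ)ᶜ : Set (Fin N)) := by
    rw [Fintype.card_compl_set, Fintype.card_compl_set,
      Set.card_range_of_injective ψ.injective, Set.card_range_of_injective φ.injective]
  let g : (Set.range ψ : Set (Fin N)) ≃ (Set.range φ : Set (Fin N)) :=
    (Equiv.ofInjective ψ ψ.injective).symm.trans (Equiv.ofInjective φ φ.injective)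
  let gc := Fintype.equivOfCardEq hc
  refine ⟨(Equiv.Set.sumCompl (Set.range ψ)).symm.trans ((g.sumCongr gc).trans
    (Equiv.Set.sumCompl (Set.range φ))), fun v => ?_⟩
  have h1 : (Equiv.Set.sumCompl (Set.range ψ)).symm (ψ v) = Sum.inl ⟨ψ v, ⟨v, rfl⟩⟩ :=
    Equiv.Set.sumCompl_symm_apply_of_mem _
  haveI : Nonempty V := ⟨v⟩
  simp [h1, g, Equiv.ofInjective, Function.leftInverse_invFun ψ.injective v]

lemma measurable_edgeProd {V E J : Type*} [Fintype E] {N : ℕ}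
    (G : Multigraph V E) (γ : E → J) (ε : E → Bool) (φ : V → Fin N) :
    Measurable (fun M : J → Matrix (Fin N) (Fin N) ℂ =>
      ∏ e : E, (if ε e then (M (γ e))ᴴ else M (γ e)) (φ (G.src e)) (φ (G.tgt e))) := by
  apply Finset.measurable_prod
  intro e _
  have h : ∀ i j : Fin N, Measurable fun M : J → Matrix (Fin N) (Fin N) ℂ => M (γ e) i j :=
    fun i j => (measurable_pi_apply j).comp
      ((measurable_pi_apply i).comp (measurable_pi_apply (γ e)))
  by_cases he : ε e <;> simp only [he, if_true, if_false, Bool.false_eq_true,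
    Matrix.conjTranspose_apply]
  · exact continuous_star.measurable.comp (h _ _)
  · exact h _ _

lemma indep_integral_mul {Ω : Type*} [MeasurableSpace Ω] {μ : Measure Ω}
    [IsProbabilityMeasure μ] {X Y : Ω → ℂ} (hX : Measurable X) (hY : Measurable Y)
    (h : IndepFun X Y μ) : ∫ ω, X ω * Y ω ∂μ = (∫ ω, X ω ∂μ) * ∫ ω, Y ω ∂μ := by
  have hmap := (indepFun_iff_map_prod_eq_prod_map_map hX.aemeasurable hY.aemeasurable).mp h
  haveI : IsProbabilityMeasure (μ.map X) := Measure.isProbabilityMeasure_map hX.aemeasurable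
  haveI : IsProbabilityMeasure (μ.map Y) := Measure.isProbabilityMeasure_map hY.aemeasurable
  have h1 : ∫ ω, X ω * Y ω ∂μ = ∫ p : ℂ × ℂ, p.1 * p.2 ∂(μ.map fun ω => (X ω, Y ω)) := by
    rw [integral_map (f := fun p : ℂ × ℂ => p.1 * p.2) (hX.prodMk hY).aemeasurable
      (measurable_fst.mul measurable_snd).aestronglyMeasurable]
  have h2 : ∫ x : ℂ, x ∂(μ.map X) = ∫ ω, X ω ∂μ :=
    integral_map hX.aemeasurable measurable_id.aestronglyMeasurable
  have h3 : ∫ x : ℂ, x ∂(μ.map Y) = ∫ ω, Y ω ∂μ :=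
    integral_map hY.aemeasurable measurable_id.aestronglyMeasurable
  rw [h1, hmap, integral_prod_mul (fun x : ℂ => x) (fun y : ℂ => y), h2, h3]

lemma integral_edgeProd_perm_eq {V E J Ω : Type*} [Fintype V] [Fintype E]
    [MeasurableSpace Ω] (μ : Measure Ω) {N : ℕ}
    (G : Multigraph V E) (γ : E → J) (ε : E → Bool)
    (C : Ω → J → Matrix (Fin N) (Fin N) ℂ) (hC : Measurable C)
    (hinv : ∀ σ : Equiv.Perm (Fin N),
      Measure.map (fun ω j => permMat N σ * C ω j * (permMat N σ)ᴴ) μ = Measure.map C μ)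
    (φ ψ : V ↪ Fin N) :
    ∫ ω, ∏ e : E, (if ε e then (C ω (γ e))ᴴ else C ω (γ e)) (φ (G.src e)) (φ (G.tgt e)) ∂μ
      = ∫ ω, ∏ e : E,
        (if ε e then (C ω (γ e))ᴴ else C ω (γ e)) (ψ (G.src e)) (ψ (G.tgt e)) ∂μ := by
  obtain ⟨σ, hσ⟩ := exists_perm_comp φ ψ
  set f : (J → Matrix (Fin N) (Fin N) ℂ) → ℂ := fun M =>
    ∏ e : E, (if ε e then (M (γ e))ᴴ else M (γ e)) (ψ (G.src e)) (ψ (G.tgt e)) with hfdef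
  have hf : Measurable f := measurable_edgeProd G γ ε fun v => ψ v
  have hCentry : ∀ (j : J) (a b : Fin N), Measurable fun ω => C ω j a b := fun j a b =>
    (measurable_pi_apply b).comp ((measurable_pi_apply a).comp ((measurable_pi_apply j).comp hC))
  have hconj : Measurable (fun ω j => permMat N σ * C ω j * (permMat N σ)ᴴ) := by
    apply measurable_pi_lambda; intro j
    apply measurable_pi_lambda; intro a
    apply measurable_pi_lambda; intro b
    simp only [permMat_conj_apply]
    exact hCentry j (σ a) (σ b)
  have key : ∀ ω, f (fun j => permMat N σ * C ω j * (permMat N σ)ᴴ)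
      = ∏ e : E, (if ε e then (C ω (γ e))ᴴ else C ω (γ e)) (φ (G.src e)) (φ (G.tgt e)) := by
    intro ω
    refine Finset.prod_congr rfl fun e _ => ?_
    by_cases he : ε e <;>
      simp [he, Matrix.conjTranspose_apply, permMat_conj_apply, hσ]
  calc ∫ ω, ∏ e : E,
        (if ε e then (C ω (γ e))ᴴ else C ω (γ e)) (φ (G.src e)) (φ (G.tgt e)) ∂μ
      = ∫ ω, f (fun j => permMat N σ * C ω j * (permMat N σ)ᴴ) ∂μ := by
        simp only [key]
    _ = ∫ x, f x ∂(Measure.map (fun ω j => permMat N σ * C ω j * (permMat N σ)ᴴ) μ) :=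
        (integral_map hconj.aemeasurable hf.aestronglyMeasurable).symm
    _ = ∫ x, f x ∂(Measure.map C μ) := by rw [hinv σ]
    _ = ∫ ω, f (C ω) ∂μ := integral_map hC.aemeasurable hf.aestronglyMeasurable

/-- For independent random families `A`, `B` of `N × N` matrices
(one of them permutation invariant in law), the injective density of Hadamard
products factorizes: `δ⁰_N[T(A∘B)] = δ⁰_N[T(A)]·δ⁰_N[T(B)]`. -/
theorem injDensity_hadamard_eq_mul
    {V E J Ω : Type*} [Fintype V] [Fintype E]
    [MeasurableSpace Ω] (μ : Measure Ω) [IsProbabilityMeasure μ]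
    (N : ℕ) (hVN : Fintype.card V ≤ N)
    (G : Multigraph V E) (hconn : G.Connected) (γ : E → J) (ε : E → Bool)
    (A B : Ω → J → Matrix (Fin N) (Fin N) ℂ)
    (hAmeas : Measurable A) (hBmeas : Measurable B)
    (hIndep : IndepFun A B μ)
    (hInv : (∀ σ : Equiv.Perm (Fin N),
        Measure.map (fun ω j => permMat N σ * A ω j * (permMat N σ)ᴴ) μ
          = Measure.map A μ) ∨
      (∀ σ : Equiv.Perm (Fin N),
        Measure.map (fun ω j => permMat N σ * B ω j * (permMat N σ)ᴴ) μ
          = Measure.map B μ))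
    (hIntA : ∀ φ : V ↪ Fin N, Integrable (fun ω => ∏ e : E,
      (if ε e then (A ω (γ e))ᴴ else A ω (γ e)) (φ (G.src e)) (φ (G.tgt e))) μ)
    (hIntB : ∀ φ : V ↪ Fin N, Integrable (fun ω => ∏ e : E,
      (if ε e then (B ω (γ e))ᴴ else B ω (γ e)) (φ (G.src e)) (φ (G.tgt e))) μ) :
    injDensity μ N G γ ε (fun ω j => Matrix.hadamard (A ω j) (B ω j))
      = injDensity μ N G γ ε A * injDensity μ N G γ ε B := by
    classical
  obtain ⟨φ₀⟩ : Nonempty (V ↪ Fin N) :=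
    ⟨(Fintype.equivFin V).toEmbedding.trans (Fin.castLEEmb hVN)⟩
  haveI : Nonempty (V ↪ Fin N) := ⟨φ₀⟩
  have hne : (Nat.card (V ↪ Fin N) : ℂ) ≠ 0 := by
    have h0 : 0 < Nat.card (V ↪ Fin N) := Nat.card_pos
    exact_mod_cast h0.ne'
  -- abbreviations
  let IA : (V ↪ Fin N) → ℂ := fun φ => ∫ ω, ∏ e : E,
      (if ε e then (A ω (γ e))ᴴ else A ω (γ e)) (φ (G.src e)) (φ (G.tgt e)) ∂μ
  let IB : (V ↪ Fin N) → ℂ := fun φ => ∫ ω, ∏ e : E,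
      (if ε e then (B ω (γ e))ᴴ else B ω (γ e)) (φ (G.src e)) (φ (G.tgt e)) ∂μ
  -- factorization at each injection
  have hfact : ∀ φ : V ↪ Fin N,
      (∫ ω, ∏ e : E, (if ε e then (Matrix.hadamard (A ω (γ e)) (B ω (γ e)))ᴴ
          else Matrix.hadamard (A ω (γ e)) (B ω (γ e)))
        (φ (G.src e)) (φ (G.tgt e)) ∂μ) = IA φ * IB φ := by
    intro φ
    have hfA := measurable_edgeProd G γ ε (fun v => φ v)
    have hfB := measurable_edgeProd G γ ε (fun v => φ v)
    have hsplit : ∀ ω, (∏ e : E, (if ε e then (Matrix.hadamard (A ω (γ e)) (B ω (γ e)))ᴴ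
          else Matrix.hadamard (A ω (γ e)) (B ω (γ e))) (φ (G.src e)) (φ (G.tgt e)))
        = (∏ e : E, (if ε e then (A ω (γ e))ᴴ else A ω (γ e)) (φ (G.src e)) (φ (G.tgt e)))
          * ∏ e : E, (if ε e then (B ω (γ e))ᴴ else B ω (γ e)) (φ (G.src e)) (φ (G.tgt e)) := by
      intro ω
      rw [← Finset.prod_mul_distrib]
      refine Finset.prod_congr rfl fun e _ => ?_
      by_cases he : ε e <;>
        simp [he, Matrix.conjTranspose_apply, Matrix.hadamard_apply, star_mul']
    have hindep2 : IndepFun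
        ((fun M : J → Matrix (Fin N) (Fin N) ℂ => ∏ e : E,
          (if ε e then (M (γ e))ᴴ else M (γ e)) (φ (G.src e)) (φ (G.tgt e))) ∘ A)
        ((fun M : J → Matrix (Fin N) (Fin N) ℂ => ∏ e : E,
          (if ε e then (M (γ e))ᴴ else M (γ e)) (φ (G.src e)) (φ (G.tgt e))) ∘ B) μ :=
      hIndep.comp hfA hfB
    simp only [hsplit]
    exact indep_integral_mul (hfA.comp hAmeas) (hfB.comp hBmeas) hindep2
  simp only [injDensity]
  have h1 : (∑ φ : V ↪ Fin N, ∫ ω, ∏ e : E,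
        (if ε e then (Matrix.hadamard (A ω (γ e)) (B ω (γ e)))ᴴ
          else Matrix.hadamard (A ω (γ e)) (B ω (γ e))) (φ (G.src e)) (φ (G.tgt e)) ∂μ)
      = ∑ φ : V ↪ Fin N, IA φ * IB φ :=
    Finset.sum_congr rfl fun φ _ => hfact φ
  rw [h1]
  rcases hInv with hA | hB
  · have hconst : ∀ φ : V ↪ Fin N, IA φ = IA φ₀ := fun φ =>
      integral_edgeProd_perm_eq μ G γ ε A hAmeas hA φ φ₀
    have h2 : ∑ φ : V ↪ Fin N, IA φ * IB φ = IA φ₀ * ∑ φ : V ↪ Fin N, IB φ := by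
      rw [Finset.mul_sum]
      exact Finset.sum_congr rfl fun φ _ => by rw [hconst φ]
    have h3 : (∑ φ : V ↪ Fin N, IA φ) = (Nat.card (V ↪ Fin N) : ℂ) * IA φ₀ := by
      rw [Finset.sum_congr rfl fun φ _ => hconst φ, Finset.sum_const, Finset.card_univ,
        nsmul_eq_mul, Nat.card_eq_fintype_card]
    rw [h2, h3, inv_mul_cancel_left₀ hne]
    ring
  · have hconst : ∀ φ : V ↪ Fin N, IB φ = IB φ₀ := fun φ =>
      integral_edgeProd_perm_eq μ G γ ε B hBmeas hB φ φ₀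
    have h2 : ∑ φ : V ↪ Fin N, IA φ * IB φ = (∑ φ : V ↪ Fin N, IA φ) * IB φ₀ := by
      rw [Finset.sum_mul]
      exact Finset.sum_congr rfl fun φ _ => by rw [hconst φ]
    have h3 : (∑ φ : V ↪ Fin N, IB φ) = (Nat.card (V ↪ Fin N) : ℂ) * IB φ₀ := by
      rw [Finset.sum_congr rfl fun φ _ => hconst φ, Finset.sum_const, Finset.card_univ,
        nsmul_eq_mul, Nat.card_eq_fintype_card]
    rw [h2, h3, inv_mul_cancel_left₀ hne]
    ring
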